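/- Assume u_n = v_n = 1 for all n and κ_n^{2p} ≠ −1. For each n ∈ {1,…,N} let M^{(n)}(λ) := L_{n−1}(λ)⋯L_1(λ)·L_N(λ)⋯L_n(λ) be the cyclically reordered monodromy matrix, with entries A^{(n)}(λ), B^{(n)}(λ), C^{(n)}(λ), D^{(n)}(λ) (so M^{(1)} = M), set μ_{n,±} := iκ_n^{±1}q^{1/2}ξ_n, and let α_{0,n} := (q^{−1}𝗏_n² + κ_n²)·(q^{−1}𝗏_n²κ_n² + 1)^{−1}·𝗎_n^{−1} (the inverse existing since κ_n^{2p} ≠ −1). Then the local operators are reconstructed from the Yang–Baxter generators: A^{(n)}(μ_{n,+}) = B^{(n)}(μ_{n,+})·𝗎_n, C^{(n)}(μ_{n,+}) = D^{(n)}(μ_{n,+})·𝗎_n, B^{(n)}(μ_{n,−}) = A^{(n)}(μ_{n,−})·α_{0,n}, and D^{(n)}(μ_{n,−}) = C^{(n)}(μ_{n,−})·α_{0,n}. -/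

import Mathlib

open Matrix Complex Filter Topology

namespace SG

/-- Index set for the basis of `(ℂ^p)^{⊗N}`. -/
abbrev Idx (p N : ℕ) := Fin N → ZMod p

/-- Operators on `(ℂ^p)^{⊗N}`, realized as matrices. -/
abbrev Op (p N : ℕ) := Matrix (Idx p N) (Idx p N) ℂ

/-- The square root of `q`: `q^{1/2} := q^{(p+1)/2}`. -/
noncomputable def qh (p : ℕ) (q : ℂ) : ℂ := q ^ ((p + 1) / 2)

/-- The operator `𝗎_n = u_n · (shift at site n)`, `𝗎_n|k⟩ = u_n |k-1⟩`. -/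
noncomputable def uop (p N : ℕ) (u : Fin N → ℂ) (n : Fin N) : Op p N :=
  Matrix.of fun f g => if f = Function.update g n (g n - 1) then u n else 0

/-- The inverse of `𝗎_n`. -/
noncomputable def uopInv (p N : ℕ) (u : Fin N → ℂ) (n : Fin N) : Op p N :=
  Matrix.of fun f g => if f = Function.update g n (g n + 1) then (u n)⁻¹ else 0

/-- The operator `𝗏_n = v_n · (clock at site n)`, `𝗏_n|k⟩ = v_n q^k |k⟩`. -/
noncomputable def vop (p N : ℕ) (q : ℂ) (v : Fin N → ℂ) (n : Fin N) : Op p N :=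
  Matrix.diagonal fun g => v n * q ^ (g n).val

/-- The inverse of `𝗏_n`. -/
noncomputable def vopInv (p N : ℕ) (q : ℂ) (v : Fin N → ℂ) (n : Fin N) : Op p N :=
  Matrix.diagonal fun g => (v n * q ^ (g n).val)⁻¹

/-- The Lax matrix `L_n(λ)`. -/
noncomputable def Lax (p N : ℕ) [NeZero p] (q : ℂ) (κ ξ u v : Fin N → ℂ) (n : Fin N)
    (lam : ℂ) : Matrix (Fin 2) (Fin 2) (Op p N) :=
  !![κ n • (uop p N u n *
        ((qh p q)⁻¹ • (κ n • vop p N q v n) + qh p q • ((κ n)⁻¹ • vopInv p N q v n))),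
     (κ n / Complex.I) • ((lam / ξ n) • vop p N q v n - (lam / ξ n)⁻¹ • vopInv p N q v n);
     (κ n / Complex.I) • ((lam / ξ n) • vopInv p N q v n - (lam / ξ n)⁻¹ • vop p N q v n),
     κ n • (uopInv p N u n *
        (qh p q • ((κ n)⁻¹ • vop p N q v n) + (qh p q)⁻¹ • (κ n • vopInv p N q v n)))]

/-- The monodromy matrix `M(λ) = L_N(λ) ⋯ L_1(λ)`. -/
noncomputable def Mon (p N : ℕ) [NeZero p] (q : ℂ) (κ ξ u v : Fin N → ℂ) (lam : ℂ) :
    Matrix (Fin 2) (Fin 2) (Op p N) :=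
  (((List.finRange N).map fun n => Lax p N q κ ξ u v n lam).reverse).prod

/-- `A(λ)`, the (1,1) entry of the monodromy matrix. -/
noncomputable def Amat (p N : ℕ) [NeZero p] (q : ℂ) (κ ξ u v : Fin N → ℂ) (lam : ℂ) :
    Op p N := Mon p N q κ ξ u v lam 0 0

/-- `B(λ)`, the (1,2) entry of the monodromy matrix. -/
noncomputable def Bmat (p N : ℕ) [NeZero p] (q : ℂ) (κ ξ u v : Fin N → ℂ) (lam : ℂ) :
    Op p N := Mon p N q κ ξ u v lam 0 1

/-- `C(λ)`, the (2,1) entry of the monodromy matrix. -/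
noncomputable def Cmat (p N : ℕ) [NeZero p] (q : ℂ) (κ ξ u v : Fin N → ℂ) (lam : ℂ) :
    Op p N := Mon p N q κ ξ u v lam 1 0

/-- `D(λ)`, the (2,2) entry of the monodromy matrix. -/
noncomputable def Dmat (p N : ℕ) [NeZero p] (q : ℂ) (κ ξ u v : Fin N → ℂ) (lam : ℂ) :
    Op p N := Mon p N q κ ξ u v lam 1 1

/-- The transfer matrix `T(λ) = A(λ) + D(λ)`. -/
noncomputable def Tmat (p N : ℕ) [NeZero p] (q : ℂ) (κ ξ u v : Fin N → ℂ) (lam : ℂ) :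
    Op p N := Amat p N q κ ξ u v lam + Dmat p N q κ ξ u v lam

/-- The grading charge `Θ = ∏_{n=1}^N 𝗏_n^{(-1)^n}` (sites `n : Fin N` correspond to
the 1-indexed site `n+1`, whence the exponent `(-1)^{n+1}`); it is a diagonal operator. -/
noncomputable def Theta (p N : ℕ) (q : ℂ) (v : Fin N → ℂ) : Op p N :=
  Matrix.diagonal fun g => ∏ n : Fin N, (v n * q ^ (g n).val) ^ ((-1 : ℤ) ^ ((n : ℕ) + 1))

/-- The inverse `Θ^{-1}` of the grading charge. -/
noncomputable def ThetaInv (p N : ℕ) (q : ℂ) (v : Fin N → ℂ) : Op p N :=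
  Matrix.diagonal fun g => ∏ n : Fin N, (v n * q ^ (g n).val) ^ ((-1 : ℤ) ^ (n : ℕ))

/-- The average `𝒪(λ) = ∏_{k=1}^p O(q^k λ)` of a commuting family `O`. -/
noncomputable def avg (p N : ℕ) [NeZero p] (q : ℂ) (O : ℂ → Op p N) (lam : ℂ) : Op p N :=
  ((List.range p).map fun k => O (q ^ (k + 1) * lam)).prod

/-- The cyclically reordered monodromy matrix
`M^{(n)}(λ) = L_{n-1}(λ)⋯L_1(λ)·L_N(λ)⋯L_n(λ)` (site `n : Fin N` is the 1-indexed
site `n+1`, so `MonCyc` at `n = 0` is `M` itself). -/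
noncomputable def MonCyc (p N : ℕ) [NeZero p] (q : ℂ) (κ ξ u v : Fin N → ℂ) (n : Fin N)
    (lam : ℂ) : Matrix (Fin 2) (Fin 2) (Op p N) :=
  ((((List.finRange N).rotate (n : ℕ)).map fun m => Lax p N q κ ξ u v m lam).reverse).prod

/-- The local operator `α_{0,n} = (q^{-1}𝗏_n² + κ_n²)(q^{-1}𝗏_n²κ_n² + 1)^{-1}𝗎_n^{-1}`. -/
noncomputable def alpha0 (p N : ℕ) [NeZero p] (q : ℂ) (κ u v : Fin N → ℂ) (n : Fin N) :
    Op p N :=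
  (q⁻¹ • vop p N q v n ^ 2 + (κ n ^ 2) • (1 : Op p N)) *
    ((q⁻¹ * κ n ^ 2) • vop p N q v n ^ 2 + 1)⁻¹ * uopInv p N u n

section Aux
set_option linter.unusedSectionVars false

variable {p N : ℕ} [NeZero p]

lemma pow_nat_mod (q : ℂ) (hq1 : q ^ p = 1) (m : ℕ) : q ^ (m % p) = q ^ m := by
  conv_rhs => rw [← Nat.div_add_mod m p]
  rw [pow_add, pow_mul, hq1, one_pow, one_mul]

lemma pow_val_add (q : ℂ) (hq1 : q ^ p = 1) (a b : ZMod p) :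
    q ^ (a + b).val = q ^ a.val * q ^ b.val := by
  rw [← pow_add, ZMod.val_add, pow_nat_mod q hq1]

lemma wadd (q : ℂ) (hq1 : q ^ p = 1) (hp1 : 1 < p) (a : ZMod p) :
    q ^ ((a + 1 : ZMod p)).val = q ^ a.val * q := by
  haveI : Fact (1 < p) := ⟨hp1⟩
  rw [pow_val_add q hq1, ZMod.val_one, pow_one]

lemma wsub (q : ℂ) (hq0 : q ≠ 0) (hq1 : q ^ p = 1) (hp1 : 1 < p) (a : ZMod p) :
    q ^ ((a - 1 : ZMod p)).val = q ^ a.val * q⁻¹ := by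
  have h := wadd q hq1 hp1 (a - 1)
  rw [sub_add_cancel] at h
  rw [h, mul_assoc, mul_inv_cancel₀ hq0, mul_one]

lemma upd_sub_add (g : Idx p N) (n : Fin N) :
    Function.update (Function.update g n (g n - 1)) n
      (Function.update g n (g n - 1) n + 1) = g := by
  simp [Function.update_idem]

lemma upd_add_sub (g : Idx p N) (n : Fin N) :
    Function.update (Function.update g n (g n + 1)) n
      (Function.update g n (g n + 1) n - 1) = g := by
  simp [Function.update_idem]

/-- Column relation transfer. -/
lemma col_rel (P L : Matrix (Fin 2) (Fin 2) (Op p N)) (X : Op p N) (j k : Fin 2)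
    (h0 : L 0 j = L 0 k * X) (h1 : L 1 j = L 1 k * X) (i : Fin 2) :
    (P * L) i j = (P * L) i k * X := by
  simp only [Matrix.mul_apply, Fin.sum_univ_two, h0, h1, add_mul, mul_assoc]

/-- `MonCyc` factors with `Lax n` as the rightmost factor. -/
lemma monCyc_factor (q : ℂ) (κ ξ u v : Fin N → ℂ) (n : Fin N) (lam : ℂ) :
    ∃ P, MonCyc p N q κ ξ u v n lam = P * Lax p N q κ ξ u v n lam := by
  have hlen : (n : ℕ) < (List.finRange N).length := by simpa using n.isLt
  have hhead : ((List.finRange N).rotate (n : ℕ)).head? = some n := by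
    rw [List.head?_rotate hlen]
    simp
  obtain ⟨t, ht⟩ : ∃ t, (List.finRange N).rotate (n : ℕ) = n :: t := by
    cases h : (List.finRange N).rotate (n : ℕ) with
    | nil => rw [h] at hhead; simp at hhead
    | cons a t =>
      rw [h] at hhead
      simp only [List.head?_cons, Option.some.injEq] at hhead
      exact ⟨t, by rw [hhead]⟩
  refine ⟨((t.map fun m => Lax p N q κ ξ u v m lam).reverse).prod, ?_⟩
  rw [MonCyc, ht]
  simp

lemma lax_plus_row0 (q : ℂ) (hq0 : q ≠ 0) (hq1 : q ^ p = 1) (hp1 : 1 < p)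
    (hs2 : qh p q ^ 2 = q) (κ ξ u v : Fin N → ℂ) (n : Fin N)
    (hκ : κ n ≠ 0) (hξ : ξ n ≠ 0) (hu : u n = 1) (hv : v n = 1) :
    Lax p N q κ ξ u v n (Complex.I * κ n * qh p q * ξ n) 0 0
      = Lax p N q κ ξ u v n (Complex.I * κ n * qh p q * ξ n) 0 1 * uop p N u n := by
  have hs0 : qh p q ≠ 0 := by
    intro h; rw [h] at hs2; simp at hs2; exact hq0 hs2.symm
  have hlam : Complex.I * κ n * qh p q * ξ n / ξ n = Complex.I * κ n * qh p q :=
    mul_div_cancel_right₀ _ hξ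
  have hvop : vop p N q v n = Matrix.diagonal (fun g : Idx p N => q ^ ((g n).val)) := by
    simp [vop, hv]
  have hvopInv : vopInv p N q v n
      = Matrix.diagonal (fun g : Idx p N => (q ^ ((g n).val))⁻¹) := by
    simp [vopInv, hv]
  have huop : uop p N u n = (Matrix.of fun f g : Idx p N =>
      if f = Function.update g n (g n - 1) then (1:ℂ) else 0) := by simp [uop, hu]
  show κ n • (uop p N u n * ((qh p q)⁻¹ • (κ n • vop p N q v n)
        + qh p q • ((κ n)⁻¹ • vopInv p N q v n)))
      = ((κ n / Complex.I) • (((Complex.I * κ n * qh p q * ξ n) / ξ n) • vop p N q v n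
        - ((Complex.I * κ n * qh p q * ξ n) / ξ n)⁻¹ • vopInv p N q v n)) * uop p N u n
  rw [hlam, hvop, hvopInv, huop]
  rw [Matrix.smul_mul]
  ext f g
  simp only [← Matrix.diagonal_smul, Matrix.diagonal_add, Matrix.diagonal_sub,
    Matrix.smul_apply, Matrix.mul_diagonal, Matrix.diagonal_mul, Matrix.of_apply,
    smul_eq_mul, Pi.add_apply, Pi.sub_apply, Pi.smul_apply, ite_mul, mul_ite,
    zero_mul, mul_zero, one_mul, mul_one]
  split_ifs with h
  · subst h
    try simp only [Function.update_self]
    rw [wsub q hq0 hq1 hp1]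
    have hs0' := hs0
    generalize hsq : qh p q = s at hs2 hs0' ⊢
    generalize hW : (q : ℂ) ^ ((g n).val) = W
    have hWne : W ≠ 0 := hW ▸ pow_ne_zero _ hq0
    rw [← hs2]
    have hI := Complex.I_ne_zero
    simp only [mul_inv, Complex.inv_I, Complex.div_I]
    field_simp
    ring_nf
    simp only [Complex.I_sq]
    ring
  · rfl

lemma lax_plus_row1 {p N : ℕ} [NeZero p] (q : ℂ) (hq0 : q ≠ 0) (hq1 : q ^ p = 1) (hp1 : 1 < p)
    (hs2 : qh p q ^ 2 = q) (κ ξ u v : Fin N → ℂ) (n : Fin N)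
    (hκ : κ n ≠ 0) (hξ : ξ n ≠ 0) (hu : u n = 1) (hv : v n = 1) :
    Lax p N q κ ξ u v n (Complex.I * κ n * qh p q * ξ n) 1 0
      = Lax p N q κ ξ u v n (Complex.I * κ n * qh p q * ξ n) 1 1 * uop p N u n := by
  have hs0 : qh p q ≠ 0 := by
    intro h; rw [h] at hs2; simp at hs2; exact hq0 hs2.symm
  have hlam : Complex.I * κ n * qh p q * ξ n / ξ n = Complex.I * κ n * qh p q :=
    mul_div_cancel_right₀ _ hξ
  have hvop : vop p N q v n = Matrix.diagonal (fun g : Idx p N => q ^ ((g n).val)) := by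
    simp [vop, hv]
  have hvopInv : vopInv p N q v n
      = Matrix.diagonal (fun g : Idx p N => (q ^ ((g n).val))⁻¹) := by
    simp [vopInv, hv]
  have huop : uop p N u n = (Matrix.of fun f g : Idx p N =>
      if f = Function.update g n (g n - 1) then (1:ℂ) else 0) := by simp [uop, hu]
  have huopInv : uopInv p N u n = (Matrix.of fun f g : Idx p N =>
      if f = Function.update g n (g n + 1) then (1:ℂ) else 0) := by simp [uopInv, hu]
  show (κ n / Complex.I) • (((Complex.I * κ n * qh p q * ξ n) / ξ n) • vopInv p N q v n
        - ((Complex.I * κ n * qh p q * ξ n) / ξ n)⁻¹ • vop p N q v n)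
      = (κ n • (uopInv p N u n * (qh p q • ((κ n)⁻¹ • vop p N q v n)
        + (qh p q)⁻¹ • (κ n • vopInv p N q v n)))) * uop p N u n
  rw [hlam, hvop, hvopInv, huop, huopInv, Matrix.smul_mul]
  ext f g
  simp only [← Matrix.diagonal_smul, Matrix.diagonal_add, Matrix.diagonal_sub,
    Matrix.smul_apply, Matrix.mul_apply, Matrix.diagonal_apply, Matrix.of_apply,
    smul_eq_mul, Pi.add_apply, Pi.sub_apply, Pi.smul_apply, ite_mul, mul_ite,
    zero_mul, mul_zero, one_mul, mul_one, Finset.sum_ite_eq, Finset.sum_ite_eq',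
    Finset.mem_univ, if_true, Function.update_self, Function.update_idem,
    sub_add_cancel, Function.update_eq_self]
  split_ifs with h
  · rw [h]
    try simp only [Function.update_self]
    rw [wsub q hq0 hq1 hp1]
    have hs0' := hs0
    generalize hsq : qh p q = s at hs2 hs0' ⊢
    generalize hW : (q : ℂ) ^ ((g n).val) = W
    have hWne : W ≠ 0 := hW ▸ pow_ne_zero _ hq0
    rw [← hs2]
    have hI := Complex.I_ne_zero
    simp only [mul_inv, Complex.inv_I, Complex.div_I]
    field_simp
    ring_nf
    simp only [Complex.I_sq]
    ring
  · rfl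

lemma denom_ne {p : ℕ} (q : ℂ) (hq1 : q ^ p = 1) (hp : Odd p)
    (c : ℂ) (hc2p : c ^ (2 * p) ≠ -1) (k : ℕ) :
    q⁻¹ * (c ^ 2 * (q ^ k) ^ 2) + 1 ≠ 0 := by
  have hq0 : q ≠ 0 := by
    intro h; rw [h] at hq1
    rw [zero_pow (by rintro rfl; simp at hp)] at hq1
    exact zero_ne_one hq1
  intro h
  apply hc2p
  have h2 : c ^ 2 * (q ^ k) ^ 2 = -q := by
    field_simp at h
    linear_combination h
  have h3 : (c ^ 2 * (q ^ k) ^ 2) ^ p = (-q) ^ p := by rw [h2]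
  rw [mul_pow, ← pow_mul, ← pow_mul, ← pow_mul] at h3
  have h4 : (q : ℂ) ^ (k * (2 * p)) = 1 := by
    rw [show k * (2 * p) = p * (k * 2) by ring, pow_mul, hq1, one_pow]
  rw [h4, mul_one] at h3
  rw [h3, hp.neg_pow, hq1]

lemma unit_diag {p N : ℕ} [NeZero p] (q : ℂ) (hq1 : q ^ p = 1) (hp : Odd p)
    (κ v : Fin N → ℂ) (n : Fin N) (hv : v n = 1) (hκp : κ n ^ (2 * p) ≠ -1) :
    IsUnit ((q⁻¹ * κ n ^ 2) • vop p N q v n ^ 2 + (1 : Op p N)) := by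
  have hvop : vop p N q v n = Matrix.diagonal (fun g : Idx p N => q ^ ((g n).val)) := by
    simp [vop, hv]
  have hdiag : (q⁻¹ * κ n ^ 2) • vop p N q v n ^ 2 + (1 : Op p N)
      = Matrix.diagonal (fun g : Idx p N =>
          q⁻¹ * (κ n ^ 2 * (q ^ ((g n).val)) ^ 2) + 1) := by
    rw [hvop, Matrix.diagonal_pow,
      show (1 : Op p N) = Matrix.diagonal (fun _ => (1:ℂ)) from (Matrix.diagonal_one).symm]
    simp only [← Matrix.diagonal_smul, Matrix.diagonal_add]
    refine congrArg Matrix.diagonal (funext fun g => ?_)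
    simp only [Pi.add_apply, Pi.smul_apply, Pi.pow_apply, smul_eq_mul]
    ring
  rw [hdiag, Matrix.isUnit_iff_isUnit_det, Matrix.det_diagonal]
  refine isUnit_iff_ne_zero.mpr (Finset.prod_ne_zero_iff.mpr fun g _ => ?_)
  exact denom_ne q hq1 hp (κ n) hκp _

lemma alpha0_eq {p N : ℕ} [NeZero p] (q : ℂ) (κ u v : Fin N → ℂ) (n : Fin N)
    (hu : u n = 1) (hv : v n = 1)
    (hne : ∀ g : Idx p N, q⁻¹ * (κ n ^ 2 * (q ^ ((g n).val)) ^ 2) + 1 ≠ 0) :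
    alpha0 p N q κ u v n =
      Matrix.diagonal (fun g : Idx p N =>
        (q⁻¹ * (q ^ ((g n).val)) ^ 2 + κ n ^ 2)
          * (q⁻¹ * (κ n ^ 2 * (q ^ ((g n).val)) ^ 2) + 1)⁻¹)
        * Matrix.of (fun f g : Idx p N =>
            if f = Function.update g n (g n + 1) then (1:ℂ) else 0) := by
  have hvop : vop p N q v n = Matrix.diagonal (fun g : Idx p N => q ^ ((g n).val)) := by
    simp [vop, hv]
  have huopInv : uopInv p N u n = (Matrix.of fun f g : Idx p N =>
      if f = Function.update g n (g n + 1) then (1:ℂ) else 0) := by simp [uopInv, hu]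
  rw [alpha0, hvop, huopInv, Matrix.diagonal_pow]
  rw [show (1 : Op p N) = Matrix.diagonal (fun _ => (1:ℂ)) from (Matrix.diagonal_one).symm]
  simp only [← Matrix.diagonal_smul, Matrix.diagonal_add, Matrix.inv_diagonal,
    Matrix.diagonal_mul_diagonal]
  have hR : Ring.inverse (fun i : Idx p N =>
        ((q⁻¹ * κ n ^ 2) • (fun g : Idx p N => q ^ ((g n).val)) ^ 2) i
          + (fun _ : Idx p N => (1:ℂ)) i)
      = (fun i : Idx p N => (q⁻¹ * (κ n ^ 2 * (q ^ ((i n).val)) ^ 2) + 1)⁻¹) := by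
    have hfun : (fun i : Idx p N =>
        ((q⁻¹ * κ n ^ 2) • (fun g : Idx p N => q ^ ((g n).val)) ^ 2) i
          + (fun _ : Idx p N => (1:ℂ)) i)
        = (fun i : Idx p N => q⁻¹ * (κ n ^ 2 * (q ^ ((i n).val)) ^ 2) + 1) := by
      funext i
      simp only [Pi.add_apply, Pi.smul_apply, Pi.pow_apply, smul_eq_mul]
      ring
    rw [hfun]
    exact Ring.inverse_unit
      ⟨_, fun i : Idx p N => (q⁻¹ * (κ n ^ 2 * (q ^ ((i n).val)) ^ 2) + 1)⁻¹,
        funext fun g => mul_inv_cancel₀ (hne g),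
        funext fun g => inv_mul_cancel₀ (hne g)⟩
  rw [hR]
  refine congrArg (· * _) (congrArg Matrix.diagonal (funext fun g => ?_))
  simp only [Pi.mul_apply, Pi.add_apply, Pi.smul_apply, Pi.pow_apply, smul_eq_mul]
  ring

lemma lax_minus_row0 {p N : ℕ} [NeZero p] (q : ℂ) (hq0 : q ≠ 0) (hq1 : q ^ p = 1)
    (hp1 : 1 < p) (hp : Odd p)
    (hs2 : qh p q ^ 2 = q) (κ ξ u v : Fin N → ℂ) (n : Fin N)
    (hκ : κ n ≠ 0) (hξ : ξ n ≠ 0) (hu : u n = 1) (hv : v n = 1)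
    (hκp : κ n ^ (2 * p) ≠ -1) :
    Lax p N q κ ξ u v n (Complex.I * (κ n)⁻¹ * qh p q * ξ n) 0 1
      = Lax p N q κ ξ u v n (Complex.I * (κ n)⁻¹ * qh p q * ξ n) 0 0
        * alpha0 p N q κ u v n := by
  have hs0 : qh p q ≠ 0 := by
    intro h; rw [h] at hs2; simp at hs2; exact hq0 hs2.symm
  have hlam : Complex.I * (κ n)⁻¹ * qh p q * ξ n / ξ n = Complex.I * (κ n)⁻¹ * qh p q :=
    mul_div_cancel_right₀ _ hξ
  have hvop : vop p N q v n = Matrix.diagonal (fun g : Idx p N => q ^ ((g n).val)) := by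
    simp [vop, hv]
  have hvopInv : vopInv p N q v n
      = Matrix.diagonal (fun g : Idx p N => (q ^ ((g n).val))⁻¹) := by
    simp [vopInv, hv]
  have huop : uop p N u n = (Matrix.of fun f g : Idx p N =>
      if f = Function.update g n (g n - 1) then (1:ℂ) else 0) := by simp [uop, hu]
  rw [alpha0_eq q κ u v n hu hv (fun g => denom_ne q hq1 hp (κ n) hκp _)]
  show (κ n / Complex.I) • (((Complex.I * (κ n)⁻¹ * qh p q * ξ n) / ξ n) • vop p N q v n
        - ((Complex.I * (κ n)⁻¹ * qh p q * ξ n) / ξ n)⁻¹ • vopInv p N q v n)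
      = (κ n • (uop p N u n * ((qh p q)⁻¹ • (κ n • vop p N q v n)
        + qh p q • ((κ n)⁻¹ • vopInv p N q v n)))) * _
  rw [hlam, hvop, hvopInv, huop, Matrix.smul_mul]
  ext f g
  simp only [← Matrix.diagonal_smul, Matrix.diagonal_add, Matrix.diagonal_sub,
    Matrix.smul_apply, Matrix.mul_apply, Matrix.diagonal_apply, Matrix.of_apply,
    smul_eq_mul, Pi.add_apply, Pi.sub_apply, Pi.smul_apply, ite_mul, mul_ite,
    zero_mul, mul_zero, one_mul, mul_one, Finset.sum_ite_eq, Finset.sum_ite_eq',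
    Finset.mem_univ, if_true, Function.update_self, Function.update_idem,
    add_sub_cancel_right, Function.update_eq_self]
  split_ifs with h
  · rw [h]
    try simp only [Function.update_self]
    rw [wadd q hq1 hp1]
    have hden : q⁻¹ * (κ n ^ 2 * (q ^ ((g n).val) * q) ^ 2) + 1 ≠ 0 := by
      have := denom_ne q hq1 hp (κ n) hκp ((g n).val + 1)
      rwa [pow_succ] at this
    have hs0' := hs0
    generalize hsq : qh p q = s at hs2 hs0' ⊢
    generalize hW : (q : ℂ) ^ ((g n).val) = W at hden ⊢
    have hWne : W ≠ 0 := hW ▸ pow_ne_zero _ hq0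
    rw [← hs2] at hden ⊢
    have hdeq : (s ^ 2)⁻¹ * (κ n ^ 2 * (W * s ^ 2) ^ 2) + 1
        = κ n ^ 2 * W ^ 2 * s ^ 2 + 1 := by
      field_simp
    rw [hdeq] at hden ⊢
    have hI := Complex.I_ne_zero
    simp only [mul_inv, Complex.inv_I, Complex.div_I]
    field_simp [hden]
    ring_nf
    have hD : κ n * s ^ 5 * W + κ n ^ 3 * s ^ 7 * W ^ 3 ≠ 0 := by
      have hfac : κ n * s ^ 5 * W + κ n ^ 3 * s ^ 7 * W ^ 3
          = κ n * s ^ 5 * W * (κ n ^ 2 * W ^ 2 * s ^ 2 + 1) := by ring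
      rw [hfac]
      exact mul_ne_zero (mul_ne_zero (mul_ne_zero hκ (pow_ne_zero _ hs0')) hWne) hden
    field_simp [hD]
    have hden2 : 1 + s ^ 2 * W ^ 2 * κ n ^ 2 ≠ 0 := by
      rw [show 1 + s ^ 2 * W ^ 2 * κ n ^ 2 = κ n ^ 2 * W ^ 2 * s ^ 2 + 1 by ring]; exact hden
    field_simp
    simp only [Complex.I_sq]
    ring
  · rfl

lemma lax_minus_row1 {p N : ℕ} [NeZero p] (q : ℂ) (hq0 : q ≠ 0) (hq1 : q ^ p = 1)
    (hp1 : 1 < p) (hp : Odd p)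
    (hs2 : qh p q ^ 2 = q) (κ ξ u v : Fin N → ℂ) (n : Fin N)
    (hκ : κ n ≠ 0) (hξ : ξ n ≠ 0) (hu : u n = 1) (hv : v n = 1)
    (hκp : κ n ^ (2 * p) ≠ -1) :
    Lax p N q κ ξ u v n (Complex.I * (κ n)⁻¹ * qh p q * ξ n) 1 1
      = Lax p N q κ ξ u v n (Complex.I * (κ n)⁻¹ * qh p q * ξ n) 1 0
        * alpha0 p N q κ u v n := by
  have hs0 : qh p q ≠ 0 := by
    intro h; rw [h] at hs2; simp at hs2; exact hq0 hs2.symm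
  have hlam : Complex.I * (κ n)⁻¹ * qh p q * ξ n / ξ n = Complex.I * (κ n)⁻¹ * qh p q :=
    mul_div_cancel_right₀ _ hξ
  have hvop : vop p N q v n = Matrix.diagonal (fun g : Idx p N => q ^ ((g n).val)) := by
    simp [vop, hv]
  have hvopInv : vopInv p N q v n
      = Matrix.diagonal (fun g : Idx p N => (q ^ ((g n).val))⁻¹) := by
    simp [vopInv, hv]
  have huopInv : uopInv p N u n = (Matrix.of fun f g : Idx p N =>
      if f = Function.update g n (g n + 1) then (1:ℂ) else 0) := by simp [uopInv, hu]
  rw [alpha0_eq q κ u v n hu hv (fun g => denom_ne q hq1 hp (κ n) hκp _)]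
  show (κ n • (uopInv p N u n * (qh p q • ((κ n)⁻¹ • vop p N q v n)
        + (qh p q)⁻¹ • (κ n • vopInv p N q v n))))
      = ((κ n / Complex.I) • (((Complex.I * (κ n)⁻¹ * qh p q * ξ n) / ξ n) • vopInv p N q v n
        - ((Complex.I * (κ n)⁻¹ * qh p q * ξ n) / ξ n)⁻¹ • vop p N q v n)) * _
  rw [hlam, hvop, hvopInv, huopInv, Matrix.smul_mul]
  ext f g
  simp only [← Matrix.diagonal_smul, Matrix.diagonal_add, Matrix.diagonal_sub,
    Matrix.smul_apply, Matrix.mul_apply, Matrix.diagonal_apply, Matrix.of_apply,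
    smul_eq_mul, Pi.add_apply, Pi.sub_apply, Pi.smul_apply, ite_mul, mul_ite,
    zero_mul, mul_zero, one_mul, mul_one, Finset.sum_ite_eq, Finset.sum_ite_eq',
    Finset.mem_univ, if_true, Function.update_self, Function.update_idem,
    add_sub_cancel_right, Function.update_eq_self]
  split_ifs with h
  · rw [h]
    try simp only [Function.update_self]
    rw [wadd q hq1 hp1]
    have hden : q⁻¹ * (κ n ^ 2 * (q ^ ((g n).val) * q) ^ 2) + 1 ≠ 0 := by
      have := denom_ne q hq1 hp (κ n) hκp ((g n).val + 1)
      rwa [pow_succ] at this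
    have hs0' := hs0
    generalize hsq : qh p q = s at hs2 hs0' ⊢
    generalize hW : (q : ℂ) ^ ((g n).val) = W at hden ⊢
    have hWne : W ≠ 0 := hW ▸ pow_ne_zero _ hq0
    rw [← hs2] at hden ⊢
    have hdeq : (s ^ 2)⁻¹ * (κ n ^ 2 * (W * s ^ 2) ^ 2) + 1
        = κ n ^ 2 * W ^ 2 * s ^ 2 + 1 := by
      field_simp
    rw [hdeq] at hden ⊢
    have hI := Complex.I_ne_zero
    simp only [mul_inv, Complex.inv_I, Complex.div_I]
    field_simp [hden]
    ring_nf
    have hD : κ n * s ^ 5 * W + κ n ^ 3 * s ^ 7 * W ^ 3 ≠ 0 := by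
      have hfac : κ n * s ^ 5 * W + κ n ^ 3 * s ^ 7 * W ^ 3
          = κ n * s ^ 5 * W * (κ n ^ 2 * W ^ 2 * s ^ 2 + 1) := by ring
      rw [hfac]
      exact mul_ne_zero (mul_ne_zero (mul_ne_zero hκ (pow_ne_zero _ hs0')) hWne) hden
    field_simp [hD]
    have hden2 : 1 + s ^ 2 * W ^ 2 * κ n ^ 2 ≠ 0 := by
      rw [show 1 + s ^ 2 * W ^ 2 * κ n ^ 2 = κ n ^ 2 * W ^ 2 * s ^ 2 + 1 by ring]; exact hden
    field_simp
    simp only [Complex.I_sq]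
    ring
  · rfl


end Aux



/-- (Oota's reconstruction.) Assume `u_n = v_n = 1` and `κ_n^{2p} ≠ -1`.
With `μ_{n,±} = iκ_n^{±1}q^{1/2}ξ_n`, the operator `q^{-1}𝗏_n²κ_n² + 1` is invertible and
`A^{(n)}(μ_{n,+}) = B^{(n)}(μ_{n,+})·𝗎_n`, `C^{(n)}(μ_{n,+}) = D^{(n)}(μ_{n,+})·𝗎_n`,
`B^{(n)}(μ_{n,-}) = A^{(n)}(μ_{n,-})·α_{0,n}`, `D^{(n)}(μ_{n,-}) = C^{(n)}(μ_{n,-})·α_{0,n}`. -/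
theorem statement10 (p N : ℕ) [NeZero p] (hp : Odd p) (hp1 : 1 < p)
    (q : ℂ) (hq : IsPrimitiveRoot q p)
    (κ ξ u v : Fin N → ℂ) (hκ : ∀ n, κ n ≠ 0) (hξ : ∀ n, ξ n ≠ 0)
    (hu : ∀ n, u n = 1) (hv : ∀ n, v n = 1)
    (hN : 0 < N) (hκp : ∀ n, κ n ^ (2 * p) ≠ -1) :
    ∀ n : Fin N,
      IsUnit ((q⁻¹ * κ n ^ 2) • vop p N q v n ^ 2 + (1 : Op p N)) ∧
      MonCyc p N q κ ξ u v n (Complex.I * κ n * qh p q * ξ n) 0 0 =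
        MonCyc p N q κ ξ u v n (Complex.I * κ n * qh p q * ξ n) 0 1 * uop p N u n ∧
      MonCyc p N q κ ξ u v n (Complex.I * κ n * qh p q * ξ n) 1 0 =
        MonCyc p N q κ ξ u v n (Complex.I * κ n * qh p q * ξ n) 1 1 * uop p N u n ∧
      MonCyc p N q κ ξ u v n (Complex.I * (κ n)⁻¹ * qh p q * ξ n) 0 1 =
        MonCyc p N q κ ξ u v n (Complex.I * (κ n)⁻¹ * qh p q * ξ n) 0 0 *
          alpha0 p N q κ u v n ∧
      MonCyc p N q κ ξ u v n (Complex.I * (κ n)⁻¹ * qh p q * ξ n) 1 1 =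
        MonCyc p N q κ ξ u v n (Complex.I * (κ n)⁻¹ * qh p q * ξ n) 1 0 *
          alpha0 p N q κ u v n := by
  intro n
  have hq0 : q ≠ 0 := hq.ne_zero (NeZero.ne p)
  have hq1 : q ^ p = 1 := hq.pow_eq_one
  have hs2 : qh p q ^ 2 = q := by
    obtain ⟨m, hm⟩ := hp
    rw [qh, ← pow_mul, hm]
    rw [show (2 * m + 1 + 1) / 2 * 2 = (2 * m + 1) + 1 from by omega]
    rw [pow_succ, ← hm, hq1, one_mul]
  refine ⟨unit_diag q hq1 hp κ v n (hv n) (hκp n), ?_, ?_, ?_, ?_⟩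
  · obtain ⟨P, hP⟩ := monCyc_factor (p := p) q κ ξ u v n (Complex.I * κ n * qh p q * ξ n)
    rw [hP]
    exact col_rel P _ _ 0 1
      (lax_plus_row0 q hq0 hq1 hp1 hs2 κ ξ u v n (hκ n) (hξ n) (hu n) (hv n))
      (lax_plus_row1 q hq0 hq1 hp1 hs2 κ ξ u v n (hκ n) (hξ n) (hu n) (hv n)) 0
  · obtain ⟨P, hP⟩ := monCyc_factor (p := p) q κ ξ u v n (Complex.I * κ n * qh p q * ξ n)
    rw [hP]
    exact col_rel P _ _ 0 1
      (lax_plus_row0 q hq0 hq1 hp1 hs2 κ ξ u v n (hκ n) (hξ n) (hu n) (hv n))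
      (lax_plus_row1 q hq0 hq1 hp1 hs2 κ ξ u v n (hκ n) (hξ n) (hu n) (hv n)) 1
  · obtain ⟨P, hP⟩ := monCyc_factor (p := p) q κ ξ u v n (Complex.I * (κ n)⁻¹ * qh p q * ξ n)
    rw [hP]
    exact col_rel P _ _ 1 0
      (lax_minus_row0 q hq0 hq1 hp1 hp hs2 κ ξ u v n (hκ n) (hξ n) (hu n) (hv n) (hκp n))
      (lax_minus_row1 q hq0 hq1 hp1 hp hs2 κ ξ u v n (hκ n) (hξ n) (hu n) (hv n) (hκp n)) 0
  · obtain ⟨P, hP⟩ := monCyc_factor (p := p) q κ ξ u v n (Complex.I * (κ n)⁻¹ * qh p q * ξ n)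
    rw [hP]
    exact col_rel P _ _ 1 0
      (lax_minus_row0 q hq0 hq1 hp1 hp hs2 κ ξ u v n (hκ n) (hξ n) (hu n) (hv n) (hκp n))
      (lax_minus_row1 q hq0 hq1 hp1 hp hs2 κ ξ u v n (hκ n) (hξ n) (hu n) (hv n) (hκp n)) 1

end SG
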